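/- In the ring of integers 𝒪_K of the cubic field K there exist two distinct maximal ideals P₁ ≠ P₂ such that the ideal generated by 5 factors as 5·𝒪_K = P₁²·P₂. -/

import Mathlib

open Polynomial NumberField

noncomputable def f : Polynomial ℚ := X ^ 3 + 7 * X - 12

lemma f_monic : (f).Monic := by unfold f; monicity!
lemma f_natDegree : (f).natDegree = 3 := by unfold f; compute_degree!

lemma no_rat_root (q : ℚ) : Polynomial.aeval q f ≠ 0 := by
  intro h
  have hq : q ^ 3 + 7 * q - 12 = 0 := by simpa [f] using h
  have hint : IsIntegral ℤ q := by
    refine ⟨X ^ 3 + 7 * X - 12, by monicity!, ?_⟩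
    simpa using hq
  obtain ⟨n, hn⟩ := IsIntegrallyClosed.isIntegral_iff.mp hint
  have hn' : (n : ℚ) = q := by exact_mod_cast hn
  have hcube : (n:ℤ) ^ 3 + 7 * n - 12 = 0 := by
    rw [← hn'] at hq; exact_mod_cast hq
  have h1 : n ≤ 1 := by nlinarith [sq_nonneg n, sq_nonneg (n - 1), sq_nonneg (n + 1)]
  have h2 : 1 ≤ n := by nlinarith [sq_nonneg n, sq_nonneg (n - 1), sq_nonneg (n + 1)]
  have h3 : n = 1 := le_antisymm h1 h2
  subst h3; norm_num at hcube

lemma minpoly_eq_f {K : Type} [Field K] [Algebra ℚ K] (θ : K)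
    (hroot : Polynomial.aeval θ f = 0) : minpoly ℚ θ = f := by
  have hint : IsIntegral ℚ θ := ⟨f, f_monic, hroot⟩
  have hm := minpoly.monic hint
  have hdvd : minpoly ℚ θ ∣ f := minpoly.dvd ℚ θ hroot
  obtain ⟨c, hc⟩ := hdvd
  have hf0 : f ≠ 0 := f_monic.ne_zero
  have hc0 : c ≠ 0 := by rintro rfl; simp [hc] at hf0
  have hm0 : minpoly ℚ θ ≠ 0 := hm.ne_zero
  have hdeg : (minpoly ℚ θ).natDegree + c.natDegree = 3 := by
    rw [← f_natDegree, hc, Polynomial.natDegree_mul hm0 hc0]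
  have hpos : 0 < (minpoly ℚ θ).natDegree := minpoly.natDegree_pos hint
  have notdeg1 : (minpoly ℚ θ).natDegree ≠ 1 := by
    intro h1
    apply no_rat_root (-(minpoly ℚ θ).coeff 0)
    have hmeq : minpoly ℚ θ = X + C ((minpoly ℚ θ).coeff 0) := by
      have := Polynomial.eq_X_add_C_of_natDegree_le_one (le_of_eq h1)
      rwa [← h1, hm.coeff_natDegree, map_one, one_mul] at this
    have : Polynomial.eval (-(minpoly ℚ θ).coeff 0) (minpoly ℚ θ) = 0 := by
      rw [hmeq]; simp
    rw [Polynomial.coe_aeval_eq_eval, hc, Polynomial.eval_mul, this, zero_mul]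
  have notdeg2 : (minpoly ℚ θ).natDegree ≠ 2 := by
    intro h2
    have hdc : c.natDegree = 1 := by omega
    have ha : c.coeff 1 ≠ 0 := by
      intro h
      have := Polynomial.eq_X_add_C_of_natDegree_le_one (le_of_eq hdc) (p := c)
      rw [h, map_zero, zero_mul, zero_add] at this
      rw [this] at hdc; simp [Polynomial.natDegree_C] at hdc
    apply no_rat_root (-(c.coeff 0) / c.coeff 1)
    have hceq : c = C (c.coeff 1) * X + C (c.coeff 0) :=
      Polynomial.eq_X_add_C_of_natDegree_le_one (le_of_eq hdc)
    have : Polynomial.eval (-(c.coeff 0) / c.coeff 1) c = 0 := by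
      rw [hceq]; simp; field_simp; ring
    rw [Polynomial.coe_aeval_eq_eval, hc, Polynomial.eval_mul, this, mul_zero]
  have hdm : (minpoly ℚ θ).natDegree = 3 := by omega
  have hdc0 : c.natDegree = 0 := by omega
  obtain ⟨a, rfl⟩ := Polynomial.natDegree_eq_zero.mp hdc0
  have : a = 1 := by
    have := f_monic
    rw [hc] at this
    have h := this.leadingCoeff
    rwa [Polynomial.leadingCoeff_mul, hm.leadingCoeff, one_mul,
      Polynomial.leadingCoeff_C] at h
  rw [this] at hc
  simp [hc]

noncomputable def pbOf {K : Type} [Field K] [Algebra ℚ K] (α : K) (hint : IsIntegral ℚ α)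
    (hα : Algebra.adjoin ℚ {α} = ⊤) : PowerBasis ℚ K :=
  (Algebra.adjoin.powerBasis hint).map
    ((Subalgebra.equivOfEq _ ⊤ hα).trans Subalgebra.topEquiv)

lemma pbOf_gen {K : Type} [Field K] [Algebra ℚ K] (α : K) (hint : IsIntegral ℚ α)
    (hα : Algebra.adjoin ℚ {α} = ⊤) : (pbOf α hint hα).gen = α := by simp [pbOf]

lemma pbOf_dim {K : Type} [Field K] [Algebra ℚ K] (α : K) (hint : IsIntegral ℚ α)
    (hα : Algebra.adjoin ℚ {α} = ⊤) :
    (pbOf α hint hα).dim = (minpoly ℚ α).natDegree := by simp [pbOf]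

lemma norm_of_cubic {K : Type} [Field K] [Algebra ℚ K] (α : K) (hint : IsIntegral ℚ α)
    (hα : Algebra.adjoin ℚ {α} = ⊤)
    (g : Polynomial ℚ) (hmono : g.Monic) (hdeg : g.natDegree = 3)
    (hroot : Polynomial.aeval α g = 0) (hfin : Module.finrank ℚ K = 3) :
    Algebra.norm ℚ α = -(g.coeff 0) := by
  have hminpoly : minpoly ℚ α = g := by
    have hdvd : minpoly ℚ α ∣ g := minpoly.dvd ℚ α hroot
    have hnd : (minpoly ℚ α).natDegree = 3 := by
      have h1 := (pbOf α hint hα).finrank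
      have h2 := pbOf_dim α hint hα
      rw [hfin] at h1
      omega
    obtain ⟨c, hc⟩ := hdvd
    have hm := minpoly.monic hint
    have hc0 : c ≠ 0 := by rintro rfl; rw [mul_zero] at hc; exact hmono.ne_zero hc
    have hdc : c.natDegree = 0 := by
      have := Polynomial.natDegree_mul hm.ne_zero hc0
      rw [← hc, hdeg, hnd] at this
      omega
    obtain ⟨a, rfl⟩ := Polynomial.natDegree_eq_zero.mp hdc
    have ha : a = 1 := by
      have h := hmono.leadingCoeff
      rw [hc, Polynomial.leadingCoeff_mul, hm.leadingCoeff, one_mul,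
        Polynomial.leadingCoeff_C] at h
      exact h
    rw [ha, map_one, mul_one] at hc
    exact hc.symm
  have h := Algebra.PowerBasis.norm_gen_eq_coeff_zero_minpoly (pbOf α hint hα)
  rw [pbOf_gen] at h
  rw [h, pbOf_dim α hint hα, hminpoly, hdeg]
  ring

set_option synthInstance.maxHeartbeats 1000000 in
set_option maxHeartbeats 1000000 in
theorem stmt5_aux (K : Type) [Field K] [CharZero K] (θ : K)
    (hroot : Polynomial.aeval θ f = 0) (hgen : Algebra.adjoin ℚ {θ} = ⊤) :
    ∃ P₁ P₂ : Ideal (𝓞 K), P₁.IsMaximal ∧ P₂.IsMaximal ∧ P₁ ≠ P₂ ∧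
      Ideal.span {(5 : 𝓞 K)} = P₁ ^ 2 * P₂ := by
  have hK : θ ^ 3 + 7 * θ - 12 = 0 := by simpa [f, map_ofNat] using hroot
  have hintQ : IsIntegral ℚ θ := ⟨f, f_monic, hroot⟩
  have hminθ : minpoly ℚ θ = f := minpoly_eq_f θ hroot
  haveI hFD : Module.Finite ℚ K := Module.Finite.of_basis (pbOf θ hintQ hgen).basis
  haveI : NumberField K :=
    { to_charZero := inferInstance,
      to_finiteDimensional := Module.Finite.of_basis (pbOf θ hintQ hgen).basis }
  have hfin : Module.finrank ℚ K = 3 := by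
    have h1 := (pbOf θ hintQ hgen).finrank
    rw [pbOf_dim, hminθ, f_natDegree] at h1
    exact h1
  -- norm of θ + 3
  have hint3 : IsIntegral ℚ (θ + 3) := IsIntegral.of_finite ℚ _
  have hgen3 : Algebra.adjoin ℚ {θ + 3} = ⊤ := by
    rw [eq_top_iff, ← hgen]
    apply Algebra.adjoin_le
    intro x hx
    simp only [Set.mem_singleton_iff] at hx
    rw [hx]
    have h1 : θ + 3 ∈ Algebra.adjoin ℚ {θ + 3} := Algebra.self_mem_adjoin_singleton ℚ _
    have h2 : (3 : K) ∈ Algebra.adjoin ℚ {θ + 3} := by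
      have := Subalgebra.algebraMap_mem (Algebra.adjoin ℚ {θ + 3}) (3 : ℚ)
      rwa [map_ofNat] at this
    have := sub_mem h1 h2
    simpa using this
  have hroot3 : Polynomial.aeval (θ + 3) (X^3 - 9*X^2 + 34*X - 60 : Polynomial ℚ) = 0 := by
    simp only [map_sub, map_add, map_mul, map_pow, aeval_X, map_ofNat]
    linear_combination hK
  have hnorm3 : Algebra.norm ℚ (θ + 3) = 60 := by
    have h := norm_of_cubic (θ + 3) hint3 hgen3 (X^3 - 9*X^2 + 34*X - 60)
      (by monicity!) (by compute_degree!) hroot3 hfin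
    rw [h, Polynomial.coeff_zero_eq_eval_zero]
    simp
  -- θ as an algebraic integer
  have hintZ : IsIntegral ℤ θ := by
    refine ⟨X^3 + 7*X - 12, by monicity!, ?_⟩
    have h : Polynomial.aeval θ (X^3 + 7*X - 12 : Polynomial ℤ) = 0 := by
      simp only [map_sub, map_add, map_mul, map_pow, aeval_X, map_ofNat]
      linear_combination hK
    exact h
  set θ' : 𝓞 K := ⟨θ, hintZ⟩ with hθ'def
  have hrel : θ'^3 + 7*θ' - 12 = 0 := by
    have h : ((θ'^3 + 7*θ' - 12 : 𝓞 K) : K) = θ^3 + 7*θ - 12 := by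
      rfl
    apply NumberField.RingOfIntegers.ext
    rw [h, hK]
    exact (map_zero (algebraMap (𝓞 K) K)).symm
  have hN3 : Algebra.norm ℤ (θ' + 3) = 60 := by
    have h := Algebra.coe_norm_int (θ' + 3)
    have hc : ((θ' + 3 : 𝓞 K) : K) = θ + 3 := by
      rfl
    rw [hc, hnorm3] at h
    exact_mod_cast h
  have hN5 : Algebra.norm ℤ (5 : 𝓞 K) = 125 := by
    have h := Algebra.coe_norm_int (5 : 𝓞 K)
    have hc : ((5 : 𝓞 K) : K) = algebraMap ℚ K 5 := by
      simp [map_ofNat]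
    rw [hc, Algebra.norm_algebraMap, hfin] at h
    norm_num at h
    exact_mod_cast h
  set P₁ : Ideal (𝓞 K) := Ideal.span {5, θ' + 1} with hP₁def
  set P₂ : Ideal (𝓞 K) := Ideal.span {5, θ' + 3} with hP₂def
  have h5₁ : (5 : 𝓞 K) ∈ P₁ := Ideal.subset_span (by simp)
  have h1₁ : θ' + 1 ∈ P₁ := Ideal.subset_span (by simp)
  have h5₂ : (5 : 𝓞 K) ∈ P₂ := Ideal.subset_span (by simp)
  have h3₂ : θ' + 3 ∈ P₂ := Ideal.subset_span (by simp)
  have hfac : Ideal.span {(5 : 𝓞 K)} = P₁ ^ 2 * P₂ := by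
    apply le_antisymm
    · rw [Ideal.span_singleton_le_iff_mem, sq]
      have t₁ := Ideal.mul_mem_mul (Ideal.mul_mem_mul h1₁ h1₁) (Ideal.mul_mem_left _ 19 h3₂)
      have t₂ := Ideal.mul_mem_mul (Ideal.mul_mem_mul h1₁ h5₁) (Ideal.mul_mem_left _ 19 h3₂)
      have t₃ := Ideal.mul_mem_mul (Ideal.mul_mem_mul h1₁ h1₁) (Ideal.mul_mem_left _ 38 h5₂)
      have t₄ := Ideal.mul_mem_mul (Ideal.mul_mem_mul h5₁ h5₁) (Ideal.mul_mem_left _ 3 h5₂)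
      have key : (5 : 𝓞 K) =
          (θ' + 1) * 5 * (19 * (θ' + 3)) - (θ' + 1) * (θ' + 1) * (38 * 5)
          + (θ' + 1) * (θ' + 1) * (19 * (θ' + 3)) - 5 * 5 * (3 * 5) := by
        linear_combination (-19 : 𝓞 K) * hrel
      rw [key]
      exact sub_mem (add_mem (sub_mem t₂ t₃) t₁) t₄
    · rw [hP₁def, hP₂def, sq, Ideal.span_mul_span', Ideal.span_mul_span', Ideal.span_le]
      rintro x ⟨y, ⟨u, hu, v, hv, rfl⟩, c, hc, rfl⟩
      simp only [Set.mem_insert_iff, Set.mem_singleton_iff] at hu hv hc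
      rw [SetLike.mem_coe, Ideal.mem_span_singleton]
      rcases hu with rfl | rfl
      · exact ⟨v * c, by ring⟩
      · rcases hv with rfl | rfl
        · exact ⟨(θ' + 1) * c, by ring⟩
        · rcases hc with rfl | rfl
          · exact ⟨(θ' + 1) * (θ' + 1), by ring⟩
          · exact ⟨θ' ^ 2 + 3, by linear_combination hrel⟩
  have habs : Ideal.absNorm P₁ * Ideal.absNorm P₁ * Ideal.absNorm P₂ = 125 := by
    have h := congrArg Ideal.absNorm hfac
    rw [Ideal.absNorm_span_singleton, hN5, map_mul, map_pow] at h
    rw [sq] at h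
    omega
  have hP₁netop : Ideal.absNorm P₁ ≠ 1 := by
    intro h1
    have htop : P₁ = ⊤ := Ideal.absNorm_eq_one_iff.mp h1
    have heq : Ideal.span {(5 : 𝓞 K)} = P₂ := by
      rw [hfac, htop, Ideal.top_pow, Ideal.top_mul]
    have hmem : θ' + 3 ∈ Ideal.span {(5 : 𝓞 K)} := heq ▸ h3₂
    rw [Ideal.mem_span_singleton] at hmem
    have hdvd := map_dvd (Algebra.norm ℤ) hmem
    rw [hN5, hN3] at hdvd
    norm_num at hdvd
  have h55 : Ideal.absNorm P₁ = 5 ∧ Ideal.absNorm P₂ = 5 := by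
    have hd : Ideal.absNorm P₁ ∣ 125 :=
      ⟨Ideal.absNorm P₁ * Ideal.absNorm P₂, by rw [← habs]; ring⟩
    have hle : Ideal.absNorm P₁ ≤ 125 := Nat.le_of_dvd (by norm_num) hd
    interval_cases h : (Ideal.absNorm P₁) <;> omega
  have hirr5 : Irreducible (5 : ℕ) := Nat.irreducible_iff_prime.mpr ((by norm_num : Nat.Prime 5).prime)
  have hP₁prime : P₁.IsPrime := Ideal.isPrime_of_irreducible_absNorm (h55.1 ▸ hirr5)
  have hP₂prime : P₂.IsPrime := Ideal.isPrime_of_irreducible_absNorm (h55.2 ▸ hirr5)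
  have hP₁bot : P₁ ≠ ⊥ := by
    intro hb
    rw [hb, Ideal.absNorm_bot] at h55
    exact absurd h55.1 (by norm_num)
  have hP₂bot : P₂ ≠ ⊥ := by
    intro hb
    rw [hb, Ideal.absNorm_bot] at h55
    exact absurd h55.2 (by norm_num)
  refine ⟨P₁, P₂, hP₁prime.isMaximal hP₁bot, hP₂prime.isMaximal hP₂bot, ?_, hfac⟩
  intro hEq
  have h1mem : (1 : 𝓞 K) ∈ P₁ := by
    have h2 : (2 : 𝓞 K) ∈ P₁ := by
      have := sub_mem (hEq ▸ h3₂) h1₁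
      have heq2 : θ' + 3 - (θ' + 1) = (2 : 𝓞 K) := by ring
      rwa [heq2] at this
    have : (5 : 𝓞 K) - 2 * 2 = 1 := by norm_num
    rw [← this]
    exact sub_mem h5₁ (Ideal.mul_mem_left _ 2 h2)
  have : P₁ = ⊤ := Ideal.eq_top_of_isUnit_mem _ h1mem isUnit_one
  exact hP₁netop (by rw [this, Ideal.absNorm_top])


/-- Any field `K` containing a root `θ` of `f` that generates it over `ℚ`
is (since `f` is irreducible) a copy of the cubic field `ℚ[X]/(f)`. -/
theorem stmt_5 (K : Type) [Field K] [Algebra ℚ K] (θ : K)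
    (hroot : Polynomial.aeval θ f = 0) (hgen : Algebra.adjoin ℚ {θ} = ⊤) :
    ∃ P₁ P₂ : Ideal (𝓞 K), P₁.IsMaximal ∧ P₂.IsMaximal ∧ P₁ ≠ P₂ ∧
      Ideal.span {(5 : 𝓞 K)} = P₁ ^ 2 * P₂ := by
  rename_i instA
  haveI : CharZero K := charZero_of_injective_algebraMap (algebraMap ℚ K).injective
  have e : instA = DivisionRing.toRatAlgebra := Subsingleton.elim _ _
  exact stmt5_aux K θ (e ▸ hroot) (e ▸ hgen)
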